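/- arXiv:2411.12902 — 3 statements merged into one kernel-verified Lean document; each statement's English description precedes it below -/
import Mathlib

section
/- Let N ≥ 3, σ > -2, p > p_c(σ), K₀ = ((σ+2)/(p-1))(N-2-(σ+2)/(p-1)) > 0 and K = N-2-2(σ+2)/(p-1). Define U(r,t) = (K₀(p+1)/2 · r^{-(σ+2)})^{1/(p-1)} · (1 - tanh²((p-1)√K₀ (ln r + Kt)/2))^{1/(p-1)} for r > 0. Then U satisfies r^{-2} U_t = U_rr + ((N-1)/r) U_r + r^σ U^p for all (r,t) ∈ (0,∞) × ℝ; in particular U is an eternal solution defined for all t ∈ ℝ. -/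
open Real

lemma aux_tanh_hasDerivAt (x : ℝ) : HasDerivAt Real.tanh (1 - Real.tanh x ^ 2) x := by
  have h := (Real.hasDerivAt_sinh x).div (Real.hasDerivAt_cosh x) (Real.cosh_pos x).ne'
  have heq : (Real.sinh / Real.cosh) = Real.tanh := by
    funext y; rw [Pi.div_apply, Real.tanh_eq_sinh_div_cosh]
  rw [heq] at h
  refine h.congr_deriv ?_
  symm
  have h1 := Real.cosh_sq_sub_sinh_sq x
  have h2 := (Real.cosh_pos x).ne'
  rw [Real.tanh_eq_sinh_div_cosh]
  field_simp

lemma aux_sech_pos (x : ℝ) : 0 < 1 - Real.tanh x ^ 2 := by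
  have h1 := Real.cosh_sq_sub_sinh_sq x
  have h2 := Real.cosh_pos x
  rw [Real.tanh_eq_sinh_div_cosh, div_pow]
  have h3 : Real.sinh x ^ 2 / Real.cosh x ^ 2 < 1 := by
    rw [div_lt_one (by positivity)]; nlinarith
  linarith

lemma aux_gpow (a : ℝ) {f : ℝ → ℝ} {f' x : ℝ} (hf : HasDerivAt f f' x) :
    HasDerivAt (fun y => (1 - Real.tanh (f y) ^ 2) ^ a)
      ((1 - Real.tanh (f x) ^ 2) ^ a * (-2 * a * Real.tanh (f x) * f')) x := by
  have htanh : HasDerivAt (fun y => Real.tanh (f y)) ((1 - Real.tanh (f x) ^ 2) * f') x :=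
    (aux_tanh_hasDerivAt (f x)).comp x hf
  have hg := (htanh.pow 2).const_sub 1
  simp only [Pi.pow_apply] at hg
  have hpos := aux_sech_pos (f x)
  have h2 := hg.rpow_const (p := a) (Or.inl hpos.ne')
  convert h2 using 1
  rw [Real.rpow_sub_one hpos.ne']
  push_cast
  field_simp

theorem stmt_8 (N : ℕ) (hN : 3 ≤ N) (σ p : ℝ) (hσ : -2 < σ)
    (hp : ((N : ℝ) + σ) / ((N : ℝ) - 2) < p)
    (K₀ K : ℝ)
    (hK₀ : K₀ = ((σ + 2) / (p - 1)) * ((N : ℝ) - 2 - (σ + 2) / (p - 1)))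
    (hK : K = (N : ℝ) - 2 - 2 * (σ + 2) / (p - 1))
    (U : ℝ → ℝ → ℝ)
    (hU : ∀ r : ℝ, 0 < r → ∀ t : ℝ,
      U r t = (K₀ * (p + 1) / 2 * r ^ (-(σ + 2))) ^ (1 / (p - 1)) *
        (1 - Real.tanh ((p - 1) * Real.sqrt K₀ * (Real.log r + K * t) / 2) ^ 2)
          ^ (1 / (p - 1))) :
    ∀ r : ℝ, 0 < r → ∀ t : ℝ,
      r ^ (-2 : ℝ) * deriv (fun s => U r s) t =
        deriv (fun ρ => deriv (fun ρ' => U ρ' t) ρ) r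
          + (((N : ℝ) - 1) / r) * deriv (fun ρ => U ρ t) r
          + r ^ σ * U r t ^ p := by
  intro r hr t
  have hN3 : (3 : ℝ) ≤ (N : ℝ) := by exact_mod_cast hN
  have hN2 : (2 : ℝ) < (N : ℝ) := by linarith
  have hp1 : 1 < p := by
    have h1 : 1 < ((N : ℝ) + σ) / ((N : ℝ) - 2) := by
      rw [lt_div_iff₀ (by linarith)]; linarith
    linarith
  have hp1' : (0 : ℝ) < p - 1 := by linarith
  set a : ℝ := 1 / (p - 1) with ha_def
  have ha : 0 < a := by positivity
  have hap : a * (p - 1) = 1 := by rw [ha_def]; field_simp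
  have hdiv : (σ + 2) / (p - 1) = (σ + 2) * a := by rw [ha_def]; ring
  have hma_pos : 0 < (σ + 2) * a := by
    apply mul_pos (by linarith) ha
  have hma_lt : (σ + 2) * a < (N : ℝ) - 2 := by
    rw [← hdiv, div_lt_iff₀ hp1']
    have h1 : (N : ℝ) + σ < p * ((N : ℝ) - 2) := (div_lt_iff₀ (by linarith)).mp hp
    nlinarith
  have hK₀pos : 0 < K₀ := by
    rw [hK₀, hdiv]; exact mul_pos hma_pos (by linarith)
  set s0 : ℝ := Real.sqrt K₀ with hs0_def
  have hs0 : 0 < s0 := Real.sqrt_pos.mpr hK₀pos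
  have hs2 : s0 ^ 2 = K₀ := Real.sq_sqrt hK₀pos.le
  have hs2' : s0 ^ 2 = (σ + 2) * a * ((N : ℝ) - 2 - (σ + 2) * a) := by
    rw [hs2, hK₀, hdiv]
  have hK' : K = (N : ℝ) - 2 - 2 * ((σ + 2) * a) := by
    rw [hK, ha_def]; field_simp
  set C : ℝ := K₀ * (p + 1) / 2 with hC_def
  have hCpos : 0 < C := by
    rw [hC_def]; positivity
  have hC' : C = s0 ^ 2 * (p + 1) / 2 := by rw [hC_def, hs2]
  set V : ℝ → ℝ → ℝ := fun ρ τ => C ^ a * ρ ^ (-((σ + 2) * a)) *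
    (1 - Real.tanh ((p - 1) * s0 * (Real.log ρ + K * τ) / 2) ^ 2) ^ a with hVdef
  have hUV : ∀ ρ : ℝ, 0 < ρ → ∀ τ : ℝ, U ρ τ = V ρ τ := by
    intro ρ hρ τ
    rw [hU ρ hρ τ, Real.mul_rpow hCpos.le (Real.rpow_nonneg hρ.le _),
      ← Real.rpow_mul hρ.le, neg_mul]
  have hVpos : ∀ ρ : ℝ, 0 < ρ → ∀ τ : ℝ, 0 < V ρ τ := by
    intro ρ hρ τ
    have := aux_sech_pos ((p - 1) * s0 * (Real.log ρ + K * τ) / 2)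
    rw [hVdef]
    positivity
  -- time derivative
  have hθt : HasDerivAt (fun τ : ℝ => (p - 1) * s0 * (Real.log r + K * τ) / 2)
      ((p - 1) * s0 * K / 2) t := by
    have h1 : HasDerivAt (fun τ : ℝ => Real.log r + K * τ) K t := by
      simpa using ((hasDerivAt_id t).const_mul K).const_add (Real.log r)
    have h2 := (h1.const_mul ((p - 1) * s0)).div_const 2
    convert h2 using 1
  have hVt : HasDerivAt (fun τ => V r τ)
      (-(s0 * K * Real.tanh ((p - 1) * s0 * (Real.log r + K * t) / 2)) * V r t) t := by
    have h2 := (aux_gpow a hθt).const_mul (C ^ a * r ^ (-((σ + 2) * a)))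
    refine h2.congr_deriv ?_
    symm
    rw [hVdef]
    linear_combination (s0 * K * Real.tanh ((p - 1) * s0 * (Real.log r + K * t) / 2) *
      (C ^ a * r ^ (-((σ + 2) * a)) *
        (1 - Real.tanh ((p - 1) * s0 * (Real.log r + K * t) / 2) ^ 2) ^ a)) * hap
  have hAt : deriv (fun τ => U r τ) t
      = -(s0 * K * Real.tanh ((p - 1) * s0 * (Real.log r + K * t) / 2)) * V r t := by
    have hfun : (fun τ => U r τ) = fun τ => V r τ := funext fun τ => hUV r hr τ
    rw [hfun, hVt.deriv]
  -- spatial first derivative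
  have hθρ : ∀ ρ : ℝ, 0 < ρ → HasDerivAt (fun x : ℝ => (p - 1) * s0 * (Real.log x + K * t) / 2)
      ((p - 1) * s0 / (2 * ρ)) ρ := by
    intro ρ hρ
    have h1 : HasDerivAt (fun x : ℝ => Real.log x + K * t) ρ⁻¹ ρ :=
      (Real.hasDerivAt_log hρ.ne').add_const (K * t)
    have h2 := (h1.const_mul ((p - 1) * s0)).div_const 2
    refine h2.congr_deriv ?_
    symm
    field_simp
  have hVr : ∀ ρ : ℝ, 0 < ρ → HasDerivAt (fun x => V x t)
      (((-((σ + 2) * a) - s0 * Real.tanh ((p - 1) * s0 * (Real.log ρ + K * t) / 2)) / ρ)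
        * V ρ t) ρ := by
    intro ρ hρ
    have hB := aux_gpow a (hθρ ρ hρ)
    have hA : HasDerivAt (fun x : ℝ => C ^ a * x ^ (-((σ + 2) * a)))
        (C ^ a * (-((σ + 2) * a) * ρ ^ (-((σ + 2) * a) - 1))) ρ :=
      (Real.hasDerivAt_rpow_const (Or.inl hρ.ne')).const_mul (C ^ a)
    have h := hA.mul hB
    refine h.congr_deriv ?_
    symm
    rw [hVdef, Real.rpow_sub_one hρ.ne']
    linear_combination (C ^ a * ρ ^ (-((σ + 2) * a)) *
      (1 - Real.tanh ((p - 1) * s0 * (Real.log ρ + K * t) / 2) ^ 2) ^ a * s0 *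
      Real.tanh ((p - 1) * s0 * (Real.log ρ + K * t) / 2) / ρ) * hap
  have hD1 : ∀ ρ : ℝ, 0 < ρ → deriv (fun x => U x t) ρ =
      ((-((σ + 2) * a) - s0 * Real.tanh ((p - 1) * s0 * (Real.log ρ + K * t) / 2)) / ρ)
        * V ρ t := by
    intro ρ hρ
    have hev : (fun x => U x t) =ᶠ[nhds ρ] fun x => V x t := by
      filter_upwards [eventually_gt_nhds hρ] with x hx using hUV x hx t
    rw [hev.deriv_eq, (hVr ρ hρ).deriv]
  have hD2 : deriv (fun ρ => deriv (fun ρ' => U ρ' t) ρ) r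
      = deriv (fun ρ =>
        ((-((σ + 2) * a) - s0 * Real.tanh ((p - 1) * s0 * (Real.log ρ + K * t) / 2)) / ρ)
          * V ρ t) r := by
    apply Filter.EventuallyEq.deriv_eq
    filter_upwards [eventually_gt_nhds hr] with ρ hρ using hD1 ρ hρ
  have hNum : HasDerivAt (fun ρ : ℝ =>
      -((σ + 2) * a) - s0 * Real.tanh ((p - 1) * s0 * (Real.log ρ + K * t) / 2))
      (-(s0 * ((1 - Real.tanh ((p - 1) * s0 * (Real.log r + K * t) / 2) ^ 2)
        * ((p - 1) * s0 / (2 * r))))) r := by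
    have htanh := (aux_tanh_hasDerivAt _).comp r (hθρ r hr)
    exact (htanh.const_mul s0).const_sub (-((σ + 2) * a))
  have hQuot := hNum.div (hasDerivAt_id' (x := r)) hr.ne'
  have hDd := (hQuot.mul (hVr r hr)).deriv
  simp only [Pi.mul_def, Pi.div_def] at hDd
  have hsech := aux_sech_pos ((p - 1) * s0 * (Real.log r + K * t) / 2)
  have hap2 : a * p = a + 1 := by linear_combination hap
  have hexp : (-((σ + 2) * a)) * p = -((σ + 2) * a) + -(σ + 2) := by
    linear_combination (-(σ + 2)) * hap
  have hmerge : r ^ σ * r ^ (-(σ + 2) : ℝ) = r ^ (-2 : ℝ) := by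
    rw [← Real.rpow_add hr]; norm_num
  have hpow : r ^ σ * V r t ^ p
      = C * (1 - Real.tanh ((p - 1) * s0 * (Real.log r + K * t) / 2) ^ 2) * V r t
        * r ^ (-2 : ℝ) := by
    rw [hVdef]
    simp only
    rw [Real.mul_rpow (by positivity) (by positivity),
      Real.mul_rpow (by positivity) (by positivity),
      ← Real.rpow_mul hCpos.le, ← Real.rpow_mul hr.le, ← Real.rpow_mul hsech.le,
      hap2, hexp,
      Real.rpow_add hCpos, Real.rpow_one, Real.rpow_add hr, Real.rpow_add hsech,
      Real.rpow_one]
    linear_combination (C ^ a * C * r ^ (-((σ + 2) * a)) *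
      ((1 - Real.tanh ((p - 1) * s0 * (Real.log r + K * t) / 2) ^ 2) ^ a *
        (1 - Real.tanh ((p - 1) * s0 * (Real.log r + K * t) / 2) ^ 2))) * hmerge
  have hrm2 : r ^ (-2 : ℝ) = (r ^ 2)⁻¹ := by
    rw [show (-2 : ℝ) = -((2 : ℕ) : ℝ) by norm_num, Real.rpow_neg hr.le, Real.rpow_natCast]
  rw [hAt, hD2, hDd, hD1 r hr, hUV r hr t, hpow, hrm2]
  obtain ⟨X, hX⟩ : ∃ X, V r t = X := ⟨_, rfl⟩
  obtain ⟨T, hT⟩ : ∃ T, Real.tanh ((p - 1) * s0 * (Real.log r + K * t) / 2) = T := ⟨_, rfl⟩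
  rw [hX, hT, hK', hC']
  have hXpos := hVpos r hr t
  rw [hX] at hXpos
  field_simp
  linear_combination (-2) * hs2'
end

section
/- With U as defined from K₀ > 0, K ∈ ℝ, p > 1, σ > -2 by U(r,t) = (K₀(p+1)/2 · r^{-(σ+2)})^{1/(p-1)} (1 - tanh²((p-1)√K₀(ln r + Kt)/2))^{1/(p-1)}, for each fixed t the limit as r → 0⁺ of U(r,t) / (r^{√K₀ - (σ+2)/(p-1)} e^{√K₀ K t}) equals (2K₀(p+1))^{1/(p-1)}. -/
open Filter Set Topology

lemma tanh_aux (y : ℝ) :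
    1 - Real.tanh y ^ 2 = 4 * Real.exp (2 * y) / (Real.exp (2 * y) + 1) ^ 2 := by
  have h1 : Real.exp (2 * y) = Real.exp y * Real.exp y := by
    rw [two_mul, Real.exp_add]
  have he : Real.exp y ≠ 0 := Real.exp_ne_zero y
  have hc : Real.cosh y ≠ 0 := ne_of_gt (Real.cosh_pos y)
  rw [Real.tanh_eq_sinh_div_cosh] at *
  rw [Real.sinh_eq, Real.cosh_eq] at *
  rw [h1, Real.exp_neg] at *
  have hd : Real.exp y + (Real.exp y)⁻¹ ≠ 0 := by positivity
  field_simp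
  ring

theorem stmt_9 (K₀ K p σ : ℝ) (hK₀ : 0 < K₀) (hp : 1 < p) (hσ : -2 < σ)
    (U : ℝ → ℝ → ℝ)
    (hU : ∀ r : ℝ, 0 < r → ∀ t : ℝ,
      U r t = (K₀ * (p + 1) / 2) ^ (1 / (p - 1)) * r ^ (-(σ + 2) / (p - 1)) *
        (1 - Real.tanh ((p - 1) * Real.sqrt K₀ * (Real.log r + K * t) / 2) ^ 2)
          ^ (1 / (p - 1)))
    (t : ℝ) :
    Tendsto
      (fun r : ℝ => U r t /
        (r ^ (Real.sqrt K₀ - (σ + 2) / (p - 1)) * Real.exp (Real.sqrt K₀ * K * t)))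
      (nhdsWithin 0 (Ioi 0))
      (nhds ((2 * K₀ * (p + 1)) ^ (1 / (p - 1)))) := by
  set s := Real.sqrt K₀ with hs
  have hs0 : 0 < s := Real.sqrt_pos.mpr hK₀
  have hp1 : (0:ℝ) < p - 1 := by linarith
  set q := 1 / (p - 1) with hqdef
  have hq0 : 0 < q := by positivity
  have hqq : (p - 1) * q = 1 := by rw [hqdef, mul_one_div_cancel hp1.ne']
  have hA : (0:ℝ) < K₀ * (p + 1) / 2 := by nlinarith
  have hval : (0:ℝ) < 2 * K₀ * (p + 1) := by nlinarith
  -- the limit of the simplified expression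
  have hlog : Tendsto Real.log (nhdsWithin (0:ℝ) (Ioi 0)) atBot :=
    Real.tendsto_log_nhdsGT_zero
  have h1 : Tendsto (fun r : ℝ => (p - 1) * s * (Real.log r + K * t))
      (nhdsWithin (0:ℝ) (Ioi 0)) atBot := by
    apply Tendsto.const_mul_atBot (by positivity : (0:ℝ) < (p - 1) * s)
    exact tendsto_atBot_add_const_right _ (K * t) hlog
  have h2 : Tendsto (fun r : ℝ => Real.exp ((p - 1) * s * (Real.log r + K * t)))
      (nhdsWithin (0:ℝ) (Ioi 0)) (nhds 0) := Real.tendsto_exp_atBot.comp h1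
  have h3 : Tendsto (fun E : ℝ => K₀ * (p + 1) / 2 * (4 / (E + 1) ^ 2)) (nhds 0)
      (nhds (2 * K₀ * (p + 1))) := by
    have hc : ContinuousAt (fun E : ℝ => K₀ * (p + 1) / 2 * (4 / (E + 1) ^ 2)) 0 := by
      apply ContinuousAt.mul continuousAt_const
      exact ContinuousAt.div continuousAt_const (by fun_prop) (by norm_num)
    have := hc.tendsto
    norm_num at this
    convert this using 2
    ring
  have h4 : Tendsto (fun r : ℝ =>
      (K₀ * (p + 1) / 2 * (4 / (Real.exp ((p - 1) * s * (Real.log r + K * t)) + 1) ^ 2)) ^ q)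
      (nhdsWithin (0:ℝ) (Ioi 0)) (nhds ((2 * K₀ * (p + 1)) ^ q)) :=
    (h3.comp h2).rpow_const (Or.inl (ne_of_gt hval))
  -- eventual equality
  apply h4.congr'
  filter_upwards [self_mem_nhdsWithin] with r hr
  have hr0 : (0:ℝ) < r := hr
  set E := Real.exp ((p - 1) * s * (Real.log r + K * t)) with hE
  have hE0 : (0:ℝ) < E := Real.exp_pos _
  set y := (p - 1) * s * (Real.log r + K * t) / 2 with hy
  have h2y : 2 * y = (p - 1) * s * (Real.log r + K * t) := by rw [hy]; ring
  have e1 : 1 - Real.tanh y ^ 2 = (4 / (E + 1) ^ 2) * E := by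
    rw [tanh_aux, h2y, ← hE]; ring
  have e2 : ((4 / (E + 1) ^ 2) * E) ^ q = (4 / (E + 1) ^ 2) ^ q * (r ^ s * Real.exp (s * K * t)) := by
    rw [Real.mul_rpow (by positivity) hE0.le]
    congr 1
    rw [hE, ← Real.exp_mul,
      show ((p - 1) * s * (Real.log r + K * t)) * q = Real.log r * s + s * K * t from by
        linear_combination (s * (Real.log r + K * t)) * hqq,
      Real.exp_add, Real.rpow_def_of_pos hr0]
  rw [hU r hr0 t, ← hy, e1, e2]
  rw [Real.mul_rpow hA.le (by positivity),
    show s - (σ + 2) / (p - 1) = -(σ + 2) / (p - 1) + s from by ring,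
    Real.rpow_add hr0]
  have hx1 : r ^ (-(σ + 2) / (p - 1)) ≠ 0 := by positivity
  have hx2 : r ^ s ≠ 0 := by positivity
  have hx3 : Real.exp (s * K * t) ≠ 0 := Real.exp_ne_zero _
  field_simp
end

section
/- Let N ≥ 3, σ > -2 and p = p_s(σ) = (N+2σ+2)/(N-2), with p_s(σ) > 1. Then K = N-2-2(σ+2)/(p-1) = 0, and the corresponding function U(r) = (K₀(p+1)/2 · r^{-(σ+2)})^{1/(p-1)} (1 - tanh²((p-1)√K₀ ln r / 2))^{1/(p-1)} is a time-independent (stationary) solution: it satisfies U'' + ((N-1)/r)U' + r^σ U^p = 0 on (0,∞), and moreover lim_{r→0⁺} U(r) = (2K₀(p+1))^{1/(p-1)}. -/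
open Filter Set Topology

theorem stmt_11 (N : ℕ) (hN : 3 ≤ N) (σ : ℝ) (hσ : -2 < σ)
    (p : ℝ) (hp : p = ((N : ℝ) + 2 * σ + 2) / ((N : ℝ) - 2)) (hp1 : 1 < p)
    (K₀ : ℝ)
    (hK₀ : K₀ = ((σ + 2) / (p - 1)) * ((N : ℝ) - 2 - (σ + 2) / (p - 1)))
    (U : ℝ → ℝ)
    (hU : ∀ r : ℝ, 0 < r →
      U r = (K₀ * (p + 1) / 2 * r ^ (-(σ + 2))) ^ (1 / (p - 1)) *
        (1 - Real.tanh ((p - 1) * Real.sqrt K₀ * Real.log r / 2) ^ 2) ^ (1 / (p - 1))) :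
    (N : ℝ) - 2 - 2 * (σ + 2) / (p - 1) = 0 ∧
    (∀ r : ℝ, 0 < r →
      deriv (deriv U) r + (((N : ℝ) - 1) / r) * deriv U r + r ^ σ * U r ^ p = 0) ∧
    Tendsto U (nhdsWithin 0 (Ioi 0)) (nhds ((2 * K₀ * (p + 1)) ^ (1 / (p - 1)))) := by
  have hN2 : (2:ℝ) < (N:ℝ) := by exact_mod_cast (by omega : 2 < N)
  have hs : (0:ℝ) < σ + 2 := by linarith
  have hp0 : (0:ℝ) < p - 1 := by linarith
  have hNe : ((N:ℝ) - 2) ≠ 0 := by linarith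
  have h1 : (p - 1) * ((N:ℝ) - 2) = 2 * (σ + 2) := by
    rw [hp]; field_simp; ring
  have hR1 : 2 * (1/(p-1)) * (σ + 2) = (N:ℝ) - 2 := by
    field_simp
    linear_combination -h1
  have hdiv : (σ+2)/(p-1) = ((N:ℝ)-2)/2 := by
    rw [div_eq_div_iff hp0.ne' two_ne_zero]
    linear_combination -h1
  have hK : K₀ = (((N:ℝ)-2)/2)^2 := by rw [hK₀, hdiv]; ring
  have hK0 : 0 < K₀ := by rw [hK]; exact pow_pos (by linarith) 2
  have hsq : Real.sqrt K₀ = ((N:ℝ)-2)/2 := by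
    rw [hK, Real.sqrt_sq (by linarith)]
  have hps : (p-1) * Real.sqrt K₀ = σ + 2 := by
    rw [hsq]; linear_combination h1/2
  have hXpos : (0:ℝ) < 2 * K₀ * (p + 1) := by
    apply mul_pos (by linarith) (by linarith)
  have hX : 2 * K₀ * (p + 1) = ((N:ℝ)-2) * ((N:ℝ) + σ) := by
    rw [hK]; linear_combination (((N:ℝ)-2)/2) * h1
  set C := (2 * K₀ * (p + 1)) ^ (1 / (p - 1)) with hCdef
  have hC : 0 < C := Real.rpow_pos_of_pos hXpos _
  -- closed form
  have hUF : ∀ r : ℝ, 0 < r →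
      U r = C * (1 + r ^ (σ+2)) ^ ((-2) * (1/(p-1))) := by
    intro r hr
    have hrb : (0:ℝ) < r ^ (σ+2) := Real.rpow_pos_of_pos hr _
    have hg : (0:ℝ) < 1 + r ^ (σ+2) := by linarith
    have ht : 1 - Real.tanh ((p - 1) * Real.sqrt K₀ * Real.log r / 2) ^ 2
        = 4 * r ^ (σ+2) / (1 + r ^ (σ+2)) ^ 2 := by
      have harg : (p - 1) * Real.sqrt K₀ * Real.log r / 2 = (σ+2) * Real.log r / 2 := by
        rw [hps]
      rw [harg]
      set t := (σ+2) * Real.log r / 2 with hts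
      have hE : Real.exp t ^ 2 = r ^ (σ+2) := by
        rw [sq, ← Real.exp_add, Real.rpow_def_of_pos hr]
        congr 1; rw [hts]; ring
      rw [← hE, Real.tanh_eq_sinh_div_cosh, Real.sinh_eq, Real.cosh_eq, Real.exp_neg]
      have hE0 : Real.exp t ≠ 0 := (Real.exp_pos t).ne'
      have hEE : Real.exp t + (Real.exp t)⁻¹ ≠ 0 := by positivity
      have h1E : (1:ℝ) + Real.exp t ^ 2 ≠ 0 := by positivity
      field_simp
      ring
    rw [hU r hr, ht]
    have hbase : K₀ * (p + 1) / 2 * r ^ (-(σ + 2)) * (4 * r ^ (σ+2) / (1 + r ^ (σ+2)) ^ 2)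
        = 2 * K₀ * (p + 1) * (1 + r ^ (σ+2)) ^ ((-2:ℝ)) := by
      have hinv : r ^ (-(σ+2)) * r ^ (σ+2) = 1 := by
        rw [← Real.rpow_add hr, show -(σ+2)+(σ+2) = (0:ℝ) by ring, Real.rpow_zero]
      have hg2 : (1 + r ^ (σ+2)) ^ ((-2:ℝ)) = ((1 + r ^ (σ+2)) ^ 2)⁻¹ := by
        rw [Real.rpow_neg hg.le, Real.rpow_two]
      rw [hg2]
      calc K₀ * (p + 1) / 2 * r ^ (-(σ + 2)) * (4 * r ^ (σ+2) / (1 + r ^ (σ+2)) ^ 2)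
          = 2*K₀*(p+1) * (r ^ (-(σ+2)) * r ^ (σ+2)) * ((1 + r ^ (σ+2)) ^ 2)⁻¹ := by ring
        _ = 2*K₀*(p+1) * ((1 + r ^ (σ+2)) ^ 2)⁻¹ := by rw [hinv, mul_one]
    rw [← Real.mul_rpow (by positivity) (by positivity), hbase,
      Real.mul_rpow hXpos.le (Real.rpow_nonneg hg.le _), ← Real.rpow_mul hg.le]
  refine ⟨by field_simp; linear_combination h1, ?_, ?_⟩
  · -- ODE
    have hF' : ∀ r : ℝ, 0 < r →
        HasDerivAt (fun x : ℝ => C * (1 + x ^ (σ+2)) ^ ((-2) * (1/(p-1))))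
          ((C * ((-2) * (1/(p-1))) * (σ+2)) *
            ((1 + r ^ (σ+2)) ^ ((-2) * (1/(p-1)) - 1) * r ^ (σ+1))) r := by
      intro r hr
      have hrb : (0:ℝ) < r ^ (σ+2) := Real.rpow_pos_of_pos hr _
      have hg : (0:ℝ) < 1 + r ^ (σ+2) := by linarith
      have h1d : HasDerivAt (fun x : ℝ => 1 + x ^ (σ+2)) ((σ+2) * r ^ (σ+1)) r := by
        have := (Real.hasDerivAt_rpow_const (x := r) (p := σ+2) (Or.inl hr.ne')).const_add 1
        simpa [show σ+2-1 = σ+1 by ring] using this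
      have h2d := (h1d.rpow_const (p := (-2) * (1/(p-1))) (Or.inl hg.ne')).const_mul C
      refine h2d.congr_deriv ?_
      ring
    have hG' : ∀ r : ℝ, 0 < r →
        HasDerivAt (fun x : ℝ => (C * ((-2) * (1/(p-1))) * (σ+2)) *
            ((1 + x ^ (σ+2)) ^ ((-2) * (1/(p-1)) - 1) * x ^ (σ+1)))
          ((C * ((-2) * (1/(p-1))) * (σ+2)) *
            ((((-2) * (1/(p-1)) - 1) * (1 + r ^ (σ+2)) ^ ((-2) * (1/(p-1)) - 2) * ((σ+2) * r ^ (σ+1))) * r ^ (σ+1)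
              + (1 + r ^ (σ+2)) ^ ((-2) * (1/(p-1)) - 1) * ((σ+1) * r ^ σ))) r := by
      intro r hr
      have hrb : (0:ℝ) < r ^ (σ+2) := Real.rpow_pos_of_pos hr _
      have hg : (0:ℝ) < 1 + r ^ (σ+2) := by linarith
      have h1d : HasDerivAt (fun x : ℝ => 1 + x ^ (σ+2)) ((σ+2) * r ^ (σ+1)) r := by
        have := (Real.hasDerivAt_rpow_const (x := r) (p := σ+2) (Or.inl hr.ne')).const_add 1
        simpa [show σ+2-1 = σ+1 by ring] using this
      have h2d := h1d.rpow_const (p := (-2) * (1/(p-1)) - 1) (Or.inl hg.ne')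
      have h3d : HasDerivAt (fun x : ℝ => x ^ (σ+1)) ((σ+1) * r ^ σ) r := by
        have := Real.hasDerivAt_rpow_const (x := r) (p := σ+1) (Or.inl hr.ne')
        simpa [show σ+1-1 = σ by ring] using this
      have h4d := (h2d.mul h3d).const_mul (C * ((-2) * (1/(p-1))) * (σ+2))
      refine h4d.congr_deriv ?_
      simp only [show (-2) * (1/(p-1)) - 1 - 1 = (-2) * (1/(p-1)) - 2 by ring]
      ring
    intro r hr
    have hrb : (0:ℝ) < r ^ (σ+2) := Real.rpow_pos_of_pos hr _
    have hg : (0:ℝ) < 1 + r ^ (σ+2) := by linarith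
    have hderivU : ∀ x : ℝ, 0 < x → deriv U x =
        (C * ((-2) * (1/(p-1))) * (σ+2)) *
          ((1 + x ^ (σ+2)) ^ ((-2) * (1/(p-1)) - 1) * x ^ (σ+1)) := by
      intro x hx
      have hev : U =ᶠ[nhds x] fun y : ℝ => C * (1 + y ^ (σ+2)) ^ ((-2) * (1/(p-1))) := by
        filter_upwards [isOpen_Ioi.mem_nhds (show x ∈ Ioi (0:ℝ) from hx)] with y hy using hUF y hy
      rw [hev.deriv_eq]
      exact (hF' x hx).deriv
    have hderiv2 : deriv (deriv U) r =
        (C * ((-2) * (1/(p-1))) * (σ+2)) *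
          ((((-2) * (1/(p-1)) - 1) * (1 + r ^ (σ+2)) ^ ((-2) * (1/(p-1)) - 2) * ((σ+2) * r ^ (σ+1))) * r ^ (σ+1)
            + (1 + r ^ (σ+2)) ^ ((-2) * (1/(p-1)) - 1) * ((σ+1) * r ^ σ)) := by
      have hev : deriv U =ᶠ[nhds r] fun y : ℝ => (C * ((-2) * (1/(p-1))) * (σ+2)) *
          ((1 + y ^ (σ+2)) ^ ((-2) * (1/(p-1)) - 1) * y ^ (σ+1)) := by
        filter_upwards [isOpen_Ioi.mem_nhds (show r ∈ Ioi (0:ℝ) from hr)] with y hy using hderivU y hy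
      rw [hev.deriv_eq]
      exact (hG' r hr).deriv
    have hA1 : (1 + r ^ (σ+2)) ^ ((-2) * (1/(p-1)) - 1)
        = (1 + r ^ (σ+2)) ^ ((-2) * (1/(p-1)) - 2) * (1 + r ^ (σ+2)) := by
      rw [show (-2) * (1/(p-1)) - 1 = ((-2) * (1/(p-1)) - 2) + 1 by ring,
        Real.rpow_add hg, Real.rpow_one]
    have hB1 : r ^ (σ+1) = r ^ σ * r := by
      rw [Real.rpow_add hr σ 1, Real.rpow_one]
    have hs2 : r ^ (σ+2) = r ^ σ * r * r := by
      rw [show σ+2 = σ + 1 + 1 by ring, Real.rpow_add hr, Real.rpow_add hr, Real.rpow_one]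
    have hexp : (-2) * (1/(p-1)) * p = (-2) * (1/(p-1)) - 2 := by
      field_simp; ring
    have hCp : C ^ p = (2 * K₀ * (p + 1)) * C := by
      have h' : (1/(p-1)) * p = 1 + 1/(p-1) := by field_simp; ring
      rw [hCdef, ← Real.rpow_mul hXpos.le, h', Real.rpow_add hXpos, Real.rpow_one]
    have hUp : U r ^ p = (2 * K₀ * (p + 1)) * C * (1 + r ^ (σ+2)) ^ ((-2) * (1/(p-1)) - 2) := by
      rw [hUF r hr, Real.mul_rpow hC.le (Real.rpow_nonneg hg.le _), ← Real.rpow_mul hg.le,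
        hexp, hCp]
    rw [hderiv2, hderivU r hr, hUp, hA1, hB1, hs2]
    generalize r ^ σ = B
    generalize (1 + B * r * r) ^ ((-2) * (1/(p-1)) - 2) = T
    field_simp
    linear_combination (C*2*T*B*(-(σ+2)*(1+B*r^2) + (p-1)/2*((N:ℝ)+σ) + (σ+2))) * h1
      + (C*2*T*B*(p-1)^2/2) * hX
  · -- limit
    have h0 : Tendsto (fun x : ℝ => x ^ (σ+2)) (nhdsWithin 0 (Ioi 0)) (nhds 0) := by
      have hc := Real.continuousAt_rpow_const 0 (σ+2) (Or.inr hs.le)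
      have := hc.tendsto
      rw [Real.zero_rpow hs.ne'] at this
      exact this.mono_left nhdsWithin_le_nhds
    have hadd : Tendsto (fun x : ℝ => 1 + x ^ (σ+2)) (nhdsWithin 0 (Ioi 0)) (nhds 1) := by
      simpa using tendsto_const_nhds.add h0
    have hpow : Tendsto (fun x : ℝ => (1 + x ^ (σ+2)) ^ ((-2) * (1/(p-1))))
        (nhdsWithin 0 (Ioi 0)) (nhds 1) := by
      have hc : ContinuousAt (fun y : ℝ => y ^ ((-2) * (1/(p-1)))) 1 :=
        Real.continuousAt_rpow_const 1 _ (Or.inl one_ne_zero)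
      have := hc.tendsto.comp hadd
      simpa [Real.one_rpow, Function.comp_def] using this
    have hF : Tendsto (fun x : ℝ => C * (1 + x ^ (σ+2)) ^ ((-2) * (1/(p-1))))
        (nhdsWithin 0 (Ioi 0)) (nhds C) := by
      simpa using tendsto_const_nhds.mul hpow
    refine hF.congr' ?_
    filter_upwards [self_mem_nhdsWithin] with x hx using (hUF x hx).symm
end
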